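/- Let L be a finite relatively complemented lattice with minimal element 0 and maximal element e, and let F ⊆ L be a family such that the complement L \ Str(F) of the set of shattered elements has exactly one minimal element. Then |F| ≤ |Str(F)|. -/

import Mathlib

open scoped Classical

/-- `F` shatters `z`: for every `x ≤ z` there is `w ∈ F` with `w ⊓ z = x`. -/
def Shatters {L : Type*} [SemilatticeInf L] (F : Set L) (z : L) : Prop :=
  ∀ x ≤ z, ∃ w ∈ F, w ⊓ z = x

/-- The set of elements shattered by `F`. -/
def Str {L : Type*} [SemilatticeInf L] (F : Set L) : Set L := {z | Shatters F z}


/-- A finite lattice is relatively complemented iff it has no 3-element interval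
(Björner's characterization). -/
def IsRC (L : Type*) [Lattice L] : Prop :=
  ¬ ∃ x y : L, x < y ∧ ∃! z : L, x < z ∧ z < y

private lemma rc_aux {L : Type*} [Lattice L] [Fintype L] (hRC : IsRC L) :
    ∀ n : ℕ, ∀ a x b : L, a ≤ x → x ≤ b → (Set.Icc a b).ncard ≤ n →
      ∃ z, a ≤ z ∧ z ≤ b ∧ x ⊓ z = a ∧ x ⊔ z = b := by
  intro n
  induction n with
  | zero =>
    intro a x b hax hxb hcard
    exfalso
    have h : (Set.Icc a b).Nonempty := ⟨a, le_rfl, hax.trans hxb⟩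
    have := (Set.ncard_pos (Set.toFinite _)).mpr h
    omega
  | succ n ih =>
    intro a x b hax hxb hcard
    rcases eq_or_lt_of_le hax with rfl | hax'
    · exact ⟨b, hax.trans hxb, le_rfl, inf_eq_left.mpr (hax.trans hxb),
        sup_eq_right.mpr (hax.trans hxb)⟩
    rcases eq_or_lt_of_le hxb with rfl | hxb'
    · exact ⟨a, le_rfl, hax, inf_eq_right.mpr hax, sup_eq_left.mpr hax⟩
    by_cases hmidl : ∃ u, a < u ∧ u < x
    · obtain ⟨a', ha1, ha2⟩ := hmidl
      have hsub : Set.Icc a' b ⊂ Set.Icc a b := by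
        constructor
        · exact Set.Icc_subset_Icc_left ha1.le
        · intro h
          have := h ⟨le_rfl, hax.trans hxb⟩
          exact absurd this.1 ha1.not_ge
      have hc1 : (Set.Icc a' b).ncard ≤ n := by
        have := Set.ncard_lt_ncard hsub (Set.toFinite _); omega
      obtain ⟨y, hy1, hy2, hy3, hy4⟩ := ih a' x b ha2.le hxb hc1
      have hyb : y < b := by
        rcases eq_or_lt_of_le hy2 with rfl | h
        · exfalso
          have : x ⊓ y = x := inf_eq_left.mpr hxb
          rw [this] at hy3
          exact absurd hy3 (ne_of_gt ha2)
        · exact h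
      have hsub2 : Set.Icc a y ⊂ Set.Icc a b := by
        constructor
        · exact Set.Icc_subset_Icc_right hyb.le
        · intro h
          have := (h ⟨hax.trans hxb, le_rfl⟩).2
          exact absurd this hyb.not_ge
      have hc2 : (Set.Icc a y).ncard ≤ n := by
        have := Set.ncard_lt_ncard hsub2 (Set.toFinite _); omega
      have ha'y : a' ≤ y := hy3 ▸ inf_le_right
      obtain ⟨z, hz1, hz2, hz3, hz4⟩ := ih a a' y ha1.le ha'y hc2
      refine ⟨z, hz1, hz2.trans hyb.le, ?_, ?_⟩
      · apply le_antisymm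
        · have h1 : x ⊓ z ≤ a' := by
            calc x ⊓ z ≤ x ⊓ y := inf_le_inf_left x (hz2)
            _ = a' := hy3
          have : x ⊓ z ≤ a' ⊓ z := le_inf h1 inf_le_right
          rw [hz3] at this; exact this
        · exact le_inf hax hz1
      · apply le_antisymm
        · exact sup_le hxb (hz2.trans hyb.le)
        · have h1 : y ≤ x ⊔ z := by
            rw [← hz4]; exact sup_le (ha2.le.trans le_sup_left) le_sup_right
          calc b = x ⊔ y := hy4.symm
          _ ≤ x ⊔ z := sup_le le_sup_left h1
    · by_cases hmidr : ∃ u, x < u ∧ u < b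
      · obtain ⟨b', hb1, hb2⟩ := hmidr
        have hsub : Set.Icc a b' ⊂ Set.Icc a b := by
          constructor
          · exact Set.Icc_subset_Icc_right hb2.le
          · intro h
            have := (h ⟨hax.trans hxb, le_rfl⟩).2
            exact absurd this hb2.not_ge
        have hc1 : (Set.Icc a b').ncard ≤ n := by
          have := Set.ncard_lt_ncard hsub (Set.toFinite _); omega
        obtain ⟨y, hy1, hy2, hy3, hy4⟩ := ih a x b' hax hb1.le hc1
        have hay : a < y := by
          rcases eq_or_lt_of_le hy1 with rfl | h
          · exfalso
            have hxa : x ⊔ a = x := sup_eq_left.mpr hax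
            rw [hxa] at hy4
            exact absurd hy4 (ne_of_lt hb1)
          · exact h
        have hsub2 : Set.Icc y b ⊂ Set.Icc a b := by
          constructor
          · exact Set.Icc_subset_Icc_left hay.le
          · intro h
            have := (h ⟨le_rfl, hax.trans hxb⟩).1
            exact absurd this hay.not_ge
        have hc2 : (Set.Icc y b).ncard ≤ n := by
          have := Set.ncard_lt_ncard hsub2 (Set.toFinite _); omega
        have hyb' : y ≤ b' := hy4 ▸ le_sup_right
        obtain ⟨z, hz1, hz2, hz3, hz4⟩ := ih y b' b hyb' hb2.le hc2
        refine ⟨z, hay.le.trans hz1, hz2, ?_, ?_⟩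
        · apply le_antisymm
          · have h1 : x ⊓ z ≤ b' ⊓ z := inf_le_inf_right z hb1.le
            rw [hz3] at h1
            have : x ⊓ z ≤ x ⊓ y := le_inf inf_le_left h1
            rw [hy3] at this; exact this
          · exact le_inf hax (hay.le.trans hz1)
        · apply le_antisymm
          · exact sup_le hxb hz2
          · have h1 : b' ≤ x ⊔ z := by
              rw [← hy4]; exact sup_le le_sup_left (hz1.trans le_sup_right)
            calc b = b' ⊔ z := hz4.symm
            _ ≤ x ⊔ z := sup_le h1 le_sup_right
      · -- a ⋖ x ⋖ b : use no-3-element-interval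
        have hne : ¬ ∃! r : L, a < r ∧ r < b :=
          fun h => hRC ⟨a, b, hax'.trans hxb', h⟩
        have hv : ∃ v, (a < v ∧ v < b) ∧ v ≠ x := by
          by_contra hc
          push_neg at hc
          exact hne ⟨x, ⟨hax', hxb'⟩, fun v hv => hc v hv⟩
        obtain ⟨v, ⟨hav, hvb⟩, hvx⟩ := hv
        have hinf : x ⊓ v = a := by
          have h1 : x ⊓ v ≤ x := inf_le_left
          rcases eq_or_lt_of_le h1 with heq | hlt
          · exfalso
            have : x ≤ v := heq ▸ inf_le_right
            have hxv : x < v := lt_of_le_of_ne this (Ne.symm hvx)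
            exact hmidr ⟨v, hxv, hvb⟩
          · rcases eq_or_lt_of_le (le_inf hax hav.le : a ≤ x ⊓ v) with heq | hlt2
            · exact heq.symm
            · exact absurd ⟨x ⊓ v, hlt2, hlt⟩ hmidl
        have hsup : x ⊔ v = b := by
          have h1 : x ≤ x ⊔ v := le_sup_left
          rcases eq_or_lt_of_le h1 with heq | hlt
          · exfalso
            have : v ≤ x := heq ▸ le_sup_right
            have hvx' : v < x := lt_of_le_of_ne this hvx
            exact hmidl ⟨v, hav, hvx'⟩
          · rcases eq_or_lt_of_le (sup_le hxb hvb.le : x ⊔ v ≤ b) with heq | hlt2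
            · exact heq
            · exact absurd ⟨x ⊔ v, hlt, hlt2⟩ hmidr
        exact ⟨v, hav.le, hvb.le, hinf, hsup⟩

private lemma rc {L : Type*} [Lattice L] [Fintype L] (hRC : IsRC L) {a x b : L}
    (hax : a ≤ x) (hxb : x ≤ b) :
    ∃ z, a ≤ z ∧ z ≤ b ∧ x ⊓ z = a ∧ x ⊔ z = b :=
  rc_aux hRC (Set.Icc a b).ncard a x b hax hxb le_rfl

/-- In a finite RC lattice, if the set of non-shattered elements has exactly one
minimal element, then `|F| ≤ |Str F|`. -/
theorem ssp_of_unique_minimal_nonshattered {L : Type*} [Lattice L] [Fintype L]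
    [BoundedOrder L] (hRC : IsRC L) (F : Set L)
    (hmin : ∃! m : L, m ∈ (Str F)ᶜ ∧ ∀ u ∈ (Str F)ᶜ, ¬ u < m) :
    F.ncard ≤ (Str F).ncard := by
  obtain ⟨m, ⟨hmC, hmMin⟩, hUniq⟩ := hmin
  have key : ∀ z : L, z ∉ Str F → m ≤ z := by
    intro z hz
    obtain ⟨u, hu, humin⟩ := Set.Finite.exists_minimal
      (Set.toFinite {v | v ∈ (Str F)ᶜ ∧ v ≤ z}) ⟨z, hz, le_rfl⟩
    have hum : u = m := by
      apply hUniq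
      refine ⟨hu.1, fun v hv hlt => ?_⟩
      have := humin ⟨hv, hlt.le.trans hu.2⟩ hlt.le
      exact hlt.not_ge this
    exact hum ▸ hu.2
  have mem : ∀ z : L, ¬ m ≤ z → z ∈ Str F := fun z h => by
    by_contra hz; exact h (key z hz)
  have hmns : ¬ Shatters F m := hmC
  rw [Shatters] at hmns
  push_neg at hmns
  obtain ⟨aw, haw, hano⟩ := hmns
  rcases eq_or_lt_of_le haw with rfl | haw'
  · -- aw = m : no element of F is above m
    have hsub : F ⊆ Str F := by
      intro w hw
      apply mem
      intro hmw
      exact hano w hw (inf_eq_right.mpr hmw)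
    exact Set.ncard_le_ncard hsub (Set.toFinite _)
  · -- aw < m
    set f : L → L := fun w => if h : m ≤ w then (rc hRC haw h).choose else w with hf
    have hmaps : ∀ w ∈ F, f w ∈ Str F := by
      intro w hw
      by_cases h : m ≤ w
      · simp only [hf, dif_pos h]
        obtain ⟨h1, h2, h3, h4⟩ := (rc hRC haw h).choose_spec
        apply mem
        intro hmz
        have : m ⊓ (rc hRC haw h).choose = m := inf_eq_left.mpr hmz
        rw [this] at h3
        exact absurd h3 (ne_of_gt haw')
      · simp only [hf, dif_neg h]
        exact mem w h
    have hinj : Set.InjOn f F := by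
      intro w1 h1 w2 h2 heq
      by_cases c1 : m ≤ w1 <;> by_cases c2 : m ≤ w2
      · obtain ⟨_, _, _, e1⟩ := (rc hRC haw c1).choose_spec
        obtain ⟨_, _, _, e2⟩ := (rc hRC haw c2).choose_spec
        simp only [hf, dif_pos c1, dif_pos c2] at heq
        rw [← e1, ← e2, heq]
      · exfalso
        obtain ⟨_, _, e1, _⟩ := (rc hRC haw c1).choose_spec
        simp only [hf, dif_pos c1, dif_neg c2] at heq
        apply hano w2 h2
        rw [← heq, inf_comm, e1]
      · exfalso
        obtain ⟨_, _, e2, _⟩ := (rc hRC haw c2).choose_spec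
        simp only [hf, dif_neg c1, dif_pos c2] at heq
        apply hano w1 h1
        rw [heq, inf_comm, e2]
      · simpa only [hf, dif_neg c1, dif_neg c2] using heq
    exact Set.ncard_le_ncard_of_injOn f hmaps hinj (Set.toFinite _)
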